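/- If X ⊂ ℝ is δ-regular with constant C_R on scales α_min to α_max and δ < 1, then X is ν-porous on scales C·α_min to α_max, where ν > 0 and C depend only on δ and C_R. Specifically, one may take any integer T with T^{1-δ} > 6 C_R², ν = (3T)^{-1}, and C = 3T. -/

import Mathlib

open MeasureTheory

set_option maxHeartbeats 1000000

/-- `X` is `ν`-porous on scales `amin` to `amax`: every interval `[a,b]` with
`amin ≤ b - a ≤ amax` contains a subinterval of length `ν(b-a)` disjoint from `X`. -/
def IsPorous (X : Set ℝ) (ν amin amax : ℝ) : Prop :=
  ∀ a b : ℝ, a < b → amin ≤ b - a → b - a ≤ amax →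
    ∃ c d : ℝ, a ≤ c ∧ d ≤ b ∧ d - c = ν * (b - a) ∧ X ∩ Set.Icc c d = ∅

/-- A `δ`-regular set with `δ < 1` on scales `α_min` to `α_max` is `ν`-porous on scales
`C·α_min` to `α_max`, with `ν = (3T)⁻¹` and `C = 3T` for any integer `T` with
`T^{1-δ} > 6 C_R²`. -/
theorem stmt4 (X : Set ℝ) (hX : X.Nonempty) (hXc : IsClosed X)
    (μ : Measure ℝ) [IsLocallyFiniteMeasure μ] (hsupp : μ Xᶜ = 0)
    (δ CR amin amax : ℝ) (hδ0 : 0 ≤ δ) (hδ1 : δ < 1) (hCR : 1 ≤ CR)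
    (h0 : 0 ≤ amin) (hma : amin ≤ amax)
    (hreg : ∀ x ∈ X, ∀ r : ℝ, 0 < r → amin ≤ 2 * r → 2 * r ≤ amax →
      ENNReal.ofReal (CR⁻¹ * (2*r) ^ δ) ≤ μ (Set.Icc (x - r) (x + r)) ∧
      μ (Set.Icc (x - r) (x + r)) ≤ ENNReal.ofReal (CR * (2*r) ^ δ))
    (T : ℕ) (hT1 : 1 ≤ T) (hT : 6 * CR ^ 2 < (T : ℝ) ^ (1 - δ)) :
    IsPorous X (1 / (3 * T)) (3 * T * amin) amax := by
  have hCR0 : (0:ℝ) < CR := lt_of_lt_of_le one_pos hCR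
  -- T ≥ 7
  have hT0 : (0:ℝ) < T := by exact_mod_cast hT1
  have hT7 : (7:ℝ) ≤ T := by
    have h1 : ((T:ℝ)) ^ (1 - δ) ≤ (T:ℝ) ^ (1:ℝ) :=
      Real.rpow_le_rpow_of_exponent_le (by exact_mod_cast hT1) (by linarith)
    rw [Real.rpow_one] at h1
    have h6 : (6:ℝ) < T := by nlinarith
    have : (6:ℕ) < T := by exact_mod_cast h6
    exact_mod_cast (by omega : 7 ≤ T)
  intro a b hab hmin hmax
  set L : ℝ := b - a with hLdef
  have hL0 : 0 < L := by simp [hLdef]; linarith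
  set ℓ : ℝ := L / (3 * T) with hldef
  have h3T : (0:ℝ) < 3 * T := by linarith
  have hℓ0 : 0 < ℓ := div_pos hL0 h3T
  have hLℓ : L = 3 * T * ℓ := by
    rw [hldef, mul_div_assoc']; exact (mul_div_cancel_left₀ L h3T.ne').symm
  have hℓmin : amin ≤ ℓ := by
    rw [hldef, le_div_iff₀ h3T]; linarith
  have hℓL : ℓ ≤ L := by nlinarith
  set m : ℝ := (a + b) / 2 with hmdef
  clear_value L ℓ m
  by_cases h0c : X ∩ Set.Icc (m - ℓ/2) (m + ℓ/2) = ∅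
  · refine ⟨m - ℓ/2, m + ℓ/2, ?_, ?_, ?_, h0c⟩
    · rw [hmdef]; linarith
    · rw [hmdef]; linarith
    · rw [hldef, hLdef]; field_simp; ring
  by_cases h1c : ∃ k ∈ Finset.Ico 1 T, X ∩ Set.Icc (a + 3*k*ℓ) (a + 3*k*ℓ + ℓ) = ∅
  · obtain ⟨k, hk, hdisj⟩ := h1c
    simp only [Finset.mem_Ico] at hk
    have hk1 : (1:ℝ) ≤ k := by exact_mod_cast hk.1
    have hkT : (k:ℝ) ≤ T - 1 := by
      have : (k:ℝ) + 1 ≤ T := by exact_mod_cast hk.2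
      linarith
    refine ⟨a + 3*k*ℓ, a + 3*k*ℓ + ℓ, ?_, ?_, ?_, hdisj⟩
    · nlinarith
    · nlinarith
    · rw [hldef, hLdef]; field_simp; ring
  -- contradiction branch
  exfalso
  push_neg at h0c h1c
  obtain ⟨x₀, hx₀X, hx₀m⟩ := h0c
  simp only [Set.mem_Icc] at hx₀m
  have hx : ∀ k : ℕ, ∃ x : ℝ, k ∈ Finset.Ico 1 T →
      x ∈ X ∧ a + 3*k*ℓ ≤ x ∧ x ≤ a + 3*k*ℓ + ℓ := by
    intro k
    by_cases hk : k ∈ Finset.Ico 1 T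
    · obtain ⟨x, hx1, hx2⟩ := h1c k hk
      simp only [Set.mem_Icc] at hx2
      exact ⟨x, fun _ => ⟨hx1, hx2.1, hx2.2⟩⟩
    · exact ⟨0, fun h => absurd h hk⟩
  choose x hx using hx
  set E : ℕ → Set ℝ := fun k => Set.Icc (x k - ℓ/2) (x k + ℓ/2) with hEdef
  set R : ℝ := (L - ℓ) / 2 with hRdef
  have hR0 : 0 < R := by rw [hRdef]; nlinarith
  clear_value E R
  -- bounds for indices
  have hbnd : ∀ k ∈ Finset.Ico 1 T, (1:ℝ) ≤ k ∧ (k:ℝ) ≤ T - 1 := by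
    intro k hk
    simp only [Finset.mem_Ico] at hk
    constructor
    · exact_mod_cast hk.1
    · have : (k:ℝ) + 1 ≤ T := by exact_mod_cast hk.2
      linarith
  -- each E k is inside I := Icc (x₀ - R) (x₀ + R)
  have hsub : ∀ k ∈ Finset.Ico 1 T, E k ⊆ Set.Icc (x₀ - R) (x₀ + R) := by
    intro k hk
    obtain ⟨hk1, hk2⟩ := hbnd k hk
    obtain ⟨_, hxk1, hxk2⟩ := hx k hk
    rw [hEdef]
    apply Set.Icc_subset_Icc
    · rw [hRdef]; rw [hmdef] at hx₀m
      nlinarith [mul_le_mul_of_nonneg_right hk1 hℓ0.le, hx₀m.2, hxk1, hLdef]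
    · rw [hRdef]; rw [hmdef] at hx₀m
      nlinarith [mul_le_mul_of_nonneg_right hk2 hℓ0.le, hx₀m.1, hxk2, hLℓ]
  -- pairwise disjoint
  have hdisjE : (↑(Finset.Ico 1 T) : Set ℕ).PairwiseDisjoint E := by
    have hlt : ∀ i ∈ Finset.Ico 1 T, ∀ j ∈ Finset.Ico 1 T, i < j →
        Disjoint (E i) (E j) := by
      intro i hi j hj hij
      obtain ⟨_, hxi1, hxi2⟩ := hx i hi
      obtain ⟨_, hxj1, hxj2⟩ := hx j hj
      have hij' : (i:ℝ) + 1 ≤ j := by exact_mod_cast hij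
      apply Set.disjoint_left.mpr
      intro z hz1 hz2
      simp only [hEdef, Set.mem_Icc] at hz1 hz2
      nlinarith [hz1.2, hz2.1, mul_le_mul_of_nonneg_right hij' hℓ0.le]
    intro i hi j hj hij
    simp only [Finset.coe_Ico, Set.mem_Ico] at hi hj
    rcases lt_or_gt_of_ne hij with h | h
    · exact hlt i (Finset.mem_Ico.mpr hi) j (Finset.mem_Ico.mpr hj) h
    · exact (hlt j (Finset.mem_Ico.mpr hj) i (Finset.mem_Ico.mpr hi) h).symm
  -- measure of union
  have hmeas : μ (⋃ k ∈ Finset.Ico 1 T, E k) = ∑ k ∈ Finset.Ico 1 T, μ (E k) :=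
    measure_biUnion_finset hdisjE fun k _ => hEdef ▸ measurableSet_Icc
  -- lower bound for each piece
  have hlower : ∀ k ∈ Finset.Ico 1 T,
      ENNReal.ofReal (CR⁻¹ * ℓ ^ δ) ≤ μ (E k) := by
    intro k hk
    obtain ⟨hxX, _, _⟩ := hx k hk
    have := (hreg (x k) hxX (ℓ/2) (by linarith)
      (by linarith) (by linarith)).1
    rw [show 2 * (ℓ/2) = ℓ by ring] at this
    rw [hEdef]
    exact this
  -- upper bound for the big interval
  have hupper : μ (Set.Icc (x₀ - R) (x₀ + R)) ≤ ENNReal.ofReal (CR * (2*R) ^ δ) := by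
    refine (hreg x₀ hx₀X R hR0 ?_ ?_).2
    · rw [hRdef]; nlinarith
    · rw [hRdef]; linarith
  -- combine
  have hcard : (Finset.Ico 1 T).card = T - 1 := by
    rw [Nat.card_Ico]
  have hsum : ((T - 1 : ℕ) : ENNReal) * ENNReal.ofReal (CR⁻¹ * ℓ ^ δ)
      ≤ ENNReal.ofReal (CR * (2*R) ^ δ) := by
    calc ((T - 1 : ℕ) : ENNReal) * ENNReal.ofReal (CR⁻¹ * ℓ ^ δ)
        = (Finset.Ico 1 T).card • ENNReal.ofReal (CR⁻¹ * ℓ ^ δ) := by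
          rw [hcard, nsmul_eq_mul]
      _ ≤ ∑ k ∈ Finset.Ico 1 T, μ (E k) := Finset.card_nsmul_le_sum _ _ _ hlower
      _ = μ (⋃ k ∈ Finset.Ico 1 T, E k) := hmeas.symm
      _ ≤ μ (Set.Icc (x₀ - R) (x₀ + R)) := measure_mono (Set.iUnion₂_subset hsub)
      _ ≤ ENNReal.ofReal (CR * (2*R) ^ δ) := hupper
  -- to reals
  have hkey : ((T:ℝ) - 1) * (CR⁻¹ * ℓ ^ δ) ≤ CR * (2*R) ^ δ := by
    have hc : ((T - 1 : ℕ) : ℝ) = (T : ℝ) - 1 := by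
      push_cast [Nat.cast_sub hT1]; ring
    have hT1' : (0:ℝ) ≤ (T:ℝ) - 1 := by linarith
    have h1 : ((T - 1 : ℕ) : ENNReal) * ENNReal.ofReal (CR⁻¹ * ℓ ^ δ)
        = ENNReal.ofReal (((T:ℝ) - 1) * (CR⁻¹ * ℓ ^ δ)) := by
      rw [ENNReal.ofReal_mul hT1', ← ENNReal.ofReal_natCast (T - 1), hc]
    rw [h1] at hsum
    have h2 : (0:ℝ) ≤ CR * (2*R) ^ δ := by positivity
    exact (ENNReal.ofReal_le_ofReal_iff h2).mp hsum
  -- arithmetic contradiction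
  have h2R : 2 * R = L - ℓ := by rw [hRdef]; ring
  rw [h2R] at hkey
  have hP : (0:ℝ) < ℓ ^ δ := Real.rpow_pos_of_pos hℓ0 δ
  have hQ : (0:ℝ) < (T:ℝ) ^ δ := Real.rpow_pos_of_pos hT0 δ
  have hmono : (L - ℓ) ^ δ ≤ L ^ δ :=
    Real.rpow_le_rpow (by linarith) (by linarith) hδ0
  have hLpow : L ^ δ = (3*(T:ℝ)) ^ δ * ℓ ^ δ := by
    rw [hLdef] at hLℓ ⊢
    rw [hLℓ, Real.mul_rpow (by positivity) hℓ0.le]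
  have h3pow : (3*(T:ℝ)) ^ δ ≤ 3 * (T:ℝ) ^ δ := by
    rw [Real.mul_rpow (by norm_num) hT0.le]
    have : (3:ℝ) ^ δ ≤ 3 ^ (1:ℝ) :=
      Real.rpow_le_rpow_of_exponent_le (by norm_num) (by linarith)
    rw [Real.rpow_one] at this
    nlinarith
  have hTsplit : (T:ℝ) ^ (1 - δ) * (T:ℝ) ^ δ = T := by
    rw [← Real.rpow_add hT0]
    norm_num
  -- chain: (T-1) * CR⁻¹ * ℓ^δ ≤ CR * 3 * T^δ * ℓ^δ
  have hkey2 : ((T:ℝ) - 1) * (CR⁻¹ * ℓ ^ δ) ≤ CR * (3 * (T:ℝ) ^ δ) * ℓ ^ δ := by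
    calc ((T:ℝ) - 1) * (CR⁻¹ * ℓ ^ δ) ≤ CR * (L - ℓ) ^ δ := hkey
      _ ≤ CR * L ^ δ := by nlinarith
      _ = CR * ((3*(T:ℝ)) ^ δ * ℓ ^ δ) := by rw [hLpow]
      _ ≤ CR * (3 * (T:ℝ) ^ δ) * ℓ ^ δ := by
          nlinarith [mul_le_mul_of_nonneg_right
            (mul_le_mul_of_nonneg_left h3pow hCR0.le) hP.le]
  -- multiply by CR and cancel ℓ^δ
  have hinv : CR * CR⁻¹ = 1 := mul_inv_cancel₀ (ne_of_gt hCR0)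
  have hkey3 : ((T:ℝ) - 1) ≤ 3 * CR ^ 2 * (T:ℝ) ^ δ := by
    have h3 := mul_le_mul_of_nonneg_left hkey2 hCR0.le
    have h5 : ((T:ℝ) - 1) * ℓ ^ δ ≤ CR * (CR * (3 * (T:ℝ) ^ δ) * ℓ ^ δ) := by
      calc ((T:ℝ) - 1) * ℓ ^ δ = CR * (((T:ℝ) - 1) * (CR⁻¹ * ℓ ^ δ)) := by
            field_simp
        _ ≤ CR * (CR * (3 * (T:ℝ) ^ δ) * ℓ ^ δ) := h3
    have h4 : ((T:ℝ) - 1) * ℓ ^ δ ≤ (3 * CR ^ 2 * (T:ℝ) ^ δ) * ℓ ^ δ := by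
      nlinarith [h5]
    exact le_of_mul_le_mul_right h4 hP
  have hfin : 6 * CR ^ 2 * (T:ℝ) ^ δ < T := by
    calc 6 * CR ^ 2 * (T:ℝ) ^ δ < (T:ℝ) ^ (1 - δ) * (T:ℝ) ^ δ := by nlinarith
      _ = T := hTsplit
  linarith
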